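/- Let A be a synchronizing one-cluster automaton with letter a, level ℓ ≥ 0, and cycle C ⊆ Q of length m > 1. Let S ⊆ C with |S| = k > 0. Then the sum over 0 ≤ j ≤ m-1 of the vectors a^{ℓ+j}·γ_S in ℚ^n equals the zero vector, where γ_S = [S]^T - (k/m)[Q]^T. -/

import Mathlib

/-- Part of Lemma 1: in a synchronizing one-cluster automaton with letter `a` (acting as `f`),
level `ℓ` and cycle `C` of length `m > 1`, for any nonempty `S ⊆ C` of size `k` the sum
`∑_{j=0}^{m-1} a^{ℓ+j} γ_S` is the zero vector, where `γ_S = [S]^T - (k/m)[Q]^T`. -/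
theorem one_cluster_sum_zero {Q σ : Type*} [Fintype Q] [DecidableEq Q]
    (δ : Q → σ → Q) (a : σ) (f : Q → Q) (hf : f = fun q => δ q a)
    (hsync : ∃ w : List σ, (Finset.univ.image (fun q => w.foldl δ q)).card = 1)
    (C : Finset Q) (ℓ m : ℕ) (hm : 1 < m) (hCm : C.card = m)
    (hCf : C.image f = C)
    (hcycle : ∀ q ∈ C, ∀ s ∈ C, ∃ j < m, f^[j] q = s)
    (hlevel : IsLeast {i : ℕ | Finset.univ.image (f^[i]) = C} ℓ)
    (S : Finset Q) (hS : S ⊆ C) (k : ℕ) (hk : S.card = k) (hk0 : 0 < k)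
    (γ : Q → ℚ)
    (hγ : γ = fun q => (if q ∈ S then (1 : ℚ) else 0) - (k : ℚ) / m) :
    ∑ j ∈ Finset.range m,
      (Matrix.of fun q r : Q => if f^[ℓ + j] q = r then (1 : ℚ) else 0).mulVec γ = 0 := by
  have hmQ : (m : ℚ) ≠ 0 := by positivity
  have hstep : ∀ p ∈ C, f p ∈ C := fun p hp => hCf ▸ Finset.mem_image_of_mem f hp
  have hiter : ∀ j, ∀ p ∈ C, f^[j] p ∈ C := by
    intro j
    induction j with
    | zero => simpa using fun p hp => hp
    | succ n ih =>
      intro p hp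
      rw [Function.iterate_succ_apply]
      exact ih _ (hstep p hp)
  -- sum of γ over C is zero
  have hsumC : ∑ c ∈ C, γ c = 0 := by
    subst hγ
    rw [Finset.sum_sub_distrib]
    have h1 : ∑ c ∈ C, (if c ∈ S then (1 : ℚ) else 0) = k := by
      rw [Finset.sum_ite_mem]
      rw [Finset.inter_eq_right.mpr hS]
      simp [hk]
    rw [h1, Finset.sum_const, hCm]
    rw [nsmul_eq_mul]
    field_simp
    ring
  -- for p ∈ C, j ↦ f^[j] p is a bijection from range m to C
  have key : ∀ p ∈ C, ∑ j ∈ Finset.range m, γ (f^[j] p) = 0 := by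
    intro p hp
    have hmaps : ∀ j ∈ Finset.range m, f^[j] p ∈ C := fun j _ => hiter j p hp
    have hsurj : (↑(Finset.range m) : Set ℕ).SurjOn (fun j => f^[j] p) ↑C := by
      intro s hs
      obtain ⟨j, hj, hjs⟩ := hcycle p hp s hs
      exact ⟨j, by simpa using hj, hjs⟩
    have himg : (Finset.range m).image (fun j => f^[j] p) = C := by
      apply Finset.Subset.antisymm
      · intro x hx
        obtain ⟨j, hj, rfl⟩ := Finset.mem_image.mp hx
        exact hmaps j hj
      · intro x hx
        obtain ⟨j, hj, hjx⟩ := hsurj hx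
        exact Finset.mem_image.mpr ⟨j, by simpa using hj, hjx⟩
    have hinj : (↑(Finset.range m) : Set ℕ).InjOn (fun j => f^[j] p) :=
      Finset.injOn_of_card_image_eq (by rw [himg, hCm, Finset.card_range])
    calc ∑ j ∈ Finset.range m, γ (f^[j] p) = ∑ c ∈ C, γ c := by
          rw [← himg, Finset.sum_image (fun x hx y hy h => hinj (by simpa using hx) (by simpa using hy) h)]
      _ = 0 := hsumC
  funext q
  have hqC : f^[ℓ] q ∈ C := by
    rw [← hlevel.1]
    exact Finset.mem_image_of_mem _ (Finset.mem_univ q)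
  have : (∑ j ∈ Finset.range m,
      (Matrix.of fun q r : Q => if f^[ℓ + j] q = r then (1 : ℚ) else 0).mulVec γ) q
      = ∑ j ∈ Finset.range m, γ (f^[ℓ + j] q) := by
    rw [Finset.sum_apply]
    refine Finset.sum_congr rfl fun j _ => ?_
    simp [Matrix.mulVec, dotProduct, Finset.sum_ite_eq]
  rw [this]
  have heq : ∀ j, f^[ℓ + j] q = f^[j] (f^[ℓ] q) := by
    intro j; rw [add_comm, Function.iterate_add_apply]
  simp_rw [heq]
  exact (key _ hqC).trans rfl
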